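/- Let Φ = Φ₁i + Φ₂j + Φ₃k be a quaternion over the field of rational functions ℂ(z) (i.e., an element of Quaternion (RatFunc ℂ)) with zero scalar part, satisfying the isotropy condition Φ₁² + Φ₂² + Φ₃² = 0 in ℂ(z) (equivalently normSq Φ = 0). Then there exist a rational function λ ∈ ℂ(z) and a quaternion A over the polynomial ring ℂ[z] such that, after mapping the coefficients of A into ℂ(z), Φ = λ·(A·L·A^c), where λ acts as a central scalar and L = i + 𝕚j (with 𝕚 the constant Complex.I in ℂ(z)). -/

import Mathlib

set_option synthInstance.maxHeartbeats 400000
set_option maxHeartbeats 400000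

open Quaternion

/-- Componentwise embedding of quaternions over `ℂ[z]` into quaternions over `ℂ(z)`. -/
noncomputable def quatPolyToRatFunc (A : Quaternion (Polynomial ℂ)) :
    Quaternion (RatFunc ℂ) :=
  ⟨algebraMap (Polynomial ℂ) (RatFunc ℂ) A.re,
    algebraMap (Polynomial ℂ) (RatFunc ℂ) A.imI,
    algebraMap (Polynomial ℂ) (RatFunc ℂ) A.imJ,
    algebraMap (Polynomial ℂ) (RatFunc ℂ) A.imK⟩

/-- The null quaternion `L = i + 𝕚 j` over the field of rational functions `ℂ(z)`. -/
noncomputable def Lrat : Quaternion (RatFunc ℂ) :=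
  ⟨0, 1, RatFunc.C Complex.I, 0⟩

/-- Auxiliary: the main (nondegenerate) case, with `u = Φ₁ + 𝕚 Φ₂ ≠ 0`. -/
theorem rat_minimal_representation_aux (Φ : Quaternion (RatFunc ℂ))
    (hre : Φ.re = 0) (hiso : Φ.imI ^ 2 + Φ.imJ ^ 2 + Φ.imK ^ 2 = 0)
    (J : RatFunc ℂ) (hJ : J = RatFunc.C Complex.I) (hJ2 : J * J = -1)
    (u : RatFunc ℂ) (hX : u = Φ.imI + J * Φ.imJ) (hu : u ≠ 0) :
    ∃ (lam : RatFunc ℂ) (A : Quaternion (Polynomial ℂ)),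
      Φ = lam • (quatPolyToRatFunc A * Lrat * star (quatPolyToRatFunc A)) := by
  set f := algebraMap (Polynomial ℂ) (RatFunc ℂ) with hf
  set v : RatFunc ℂ := -(J * Φ.imK) with hv
  set P : Polynomial ℂ := u.num * v.denom with hPdef
  set Q : Polynomial ℂ := v.num * u.denom with hQdef
  set g : Polynomial ℂ := u.denom * v.denom with hgdef
  have hfg : f g ≠ 0 := RatFunc.algebraMap_ne_zero
    (mul_ne_zero u.denom_ne_zero v.denom_ne_zero)
  have hP : f P = u * f g := by
    rw [hPdef, hgdef, map_mul, map_mul]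
    rw [show u * (f u.denom * f v.denom) = (f u.num / f u.denom * f u.denom) * f v.denom by
      rw [RatFunc.num_div_denom]; ring]
    rw [div_mul_cancel₀ _ (RatFunc.algebraMap_ne_zero u.denom_ne_zero)]
  have hQ : f Q = v * f g := by
    rw [hQdef, hgdef, map_mul, map_mul]
    rw [show v * (f u.denom * f v.denom) = (f v.num / f v.denom * f v.denom) * f u.denom by
      rw [RatFunc.num_div_denom]; ring]
    rw [div_mul_cancel₀ _ (RatFunc.algebraMap_ne_zero v.denom_ne_zero), mul_comm]
  obtain ⟨w, hw⟩ : ∃ w, f g = w := ⟨_, rfl⟩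
  rw [hw] at hP hQ hfg
  refine ⟨(2 * u * w^2)⁻¹, ⟨Q, P, 0, 0⟩, ?_⟩
  have h2 : (2 : RatFunc ℂ) ≠ 0 := by
    have h := RatFunc.algebraMap_ne_zero (K := ℂ) (x := 2) (by norm_num)
    rwa [map_ofNat] at h
  ext <;>
    simp only [Quaternion.re_mul,
      Quaternion.imI_mul, Quaternion.imJ_mul, Quaternion.imK_mul, Quaternion.re_smul,
      Quaternion.imI_smul, Quaternion.imJ_smul, Quaternion.imK_smul, Quaternion.re_star,
      Quaternion.imI_star, Quaternion.imJ_star, Quaternion.imK_star] <;>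
    simp only [quatPolyToRatFunc, Lrat, Quaternion.ext_iff, Quaternion.re_mul,
      Quaternion.imI_mul, Quaternion.imJ_mul, Quaternion.imK_mul, Quaternion.re_smul,
      Quaternion.imI_smul, Quaternion.imJ_smul, Quaternion.imK_smul, Quaternion.re_star,
      Quaternion.imI_star, Quaternion.imJ_star, Quaternion.imK_star, map_zero, smul_eq_mul,
      mul_zero, zero_mul, add_zero, zero_add, sub_zero, zero_sub, neg_zero, mul_one,
      mul_neg, neg_neg, hre, ← hJ, ← hf, hP, hQ] <;>
    field_simp
  all_goals try ring
  · linear_combination hiso - (Φ.imJ^2+Φ.imK^2)*hJ2 +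
      (2*Φ.imI - u - (Φ.imI+J*Φ.imJ))*hX - (v - J*Φ.imK)*hv
  · linear_combination J*hiso +
      (2*Φ.imI*Φ.imJ + J*Φ.imJ^2 - J*Φ.imK^2)*hJ2 +
      (2*Φ.imJ + J*(u + Φ.imI + J*Φ.imJ))*hX - (J*(v - J*Φ.imK))*hv
  · linear_combination (2*Φ.imK)*hJ2 - (2*J)*hv

/-- Every isotropic purely vectorial quaternion `Φ` over `ℂ(z)` can be written
as `Φ = λ • (A L A^c)` with `λ ∈ ℂ(z)` and `A` a quaternion over the polynomial ring
`ℂ[z]`, mapped coefficientwise into `ℂ(z)`. -/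
theorem rat_minimal_representation (Φ : Quaternion (RatFunc ℂ))
    (hre : Φ.re = 0) (hiso : Φ.imI ^ 2 + Φ.imJ ^ 2 + Φ.imK ^ 2 = 0) :
    ∃ (lam : RatFunc ℂ) (A : Quaternion (Polynomial ℂ)),
      Φ = lam • (quatPolyToRatFunc A * Lrat * star (quatPolyToRatFunc A)) := by
  set J : RatFunc ℂ := RatFunc.C Complex.I with hJ
  have hJ2 : J * J = -1 := by
    rw [hJ, ← map_mul, Complex.I_mul_I, map_neg, map_one]
  by_cases hu : Φ.imI + J * Φ.imJ = 0
  · have hK2 : Φ.imK ^ 2 = 0 := by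
      linear_combination hiso - (Φ.imI - J*Φ.imJ)*hu - Φ.imJ^2*hJ2
    have hK : Φ.imK = 0 := by
      exact pow_eq_zero_iff (n := 2) (by norm_num) |>.mp hK2
    refine ⟨Φ.imI, ⟨1, 0, 0, 0⟩, ?_⟩
    ext <;>
      simp only [Quaternion.re_mul,
        Quaternion.imI_mul, Quaternion.imJ_mul, Quaternion.imK_mul, Quaternion.re_smul,
        Quaternion.imI_smul, Quaternion.imJ_smul, Quaternion.imK_smul, Quaternion.re_star,
        Quaternion.imI_star, Quaternion.imJ_star, Quaternion.imK_star] <;>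
      simp [quatPolyToRatFunc, Lrat, hre, hK, Quaternion.ext_iff, Quaternion.re_mul,
        Quaternion.imI_mul, Quaternion.imJ_mul, Quaternion.imK_mul]
    all_goals (first | linear_combination 2*Φ.imJ*hJ2 | linear_combination -Φ.imJ*hJ2 - J*hu |
      linear_combination Φ.imJ*hJ2 + J*hu | linear_combination -Φ.imJ*hJ2 + J*hu |
      linear_combination Φ.imJ*hJ2 - J*hu)
  · exact rat_minimal_representation_aux Φ hre hiso J hJ hJ2 _ rfl hu
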